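/- arXiv:1304.3805 — 2 statements merged into one kernel-verified Lean document; each statement's English description precedes it below -/
import Mathlib

section
/- Let $M = R + iI$ be a complex number, $\xi \in \mathbb{R}$, $\delta t > 0$, and $\Theta \in [0, 1/2)$. Assume $\xi I \geq 0$. Then the $\Theta$-scheme amplification factor satisfies $|1 + i(1-\Theta)\xi\delta t M| \leq |1 - i\Theta\xi\delta t M|$ if and only if $\delta t\, (1 - 2\Theta)\, \xi^2 (R^2 + I^2) \leq 2\, \xi I$. -/
/-- Θ-scheme stability criterion: for `Θ ∈ [0, 1/2)` and `ξ * M.im ≥ 0`,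
the amplification factor has modulus at most one iff the CFL condition
`δt (1 - 2Θ) ξ² (R² + I²) ≤ 2 ξ I` holds. -/
theorem theta_scheme_stability_iff (M : ℂ) (ξ δt Θ : ℝ)
    (hδt : 0 < δt) (hΘ : Θ ∈ Set.Ico (0 : ℝ) (1 / 2)) (hI : 0 ≤ ξ * M.im) :
    ‖(1 + Complex.I * ((1 - Θ : ℝ) : ℂ) * (ξ : ℂ) * (δt : ℂ) * M)‖ ≤
      ‖(1 - Complex.I * (Θ : ℂ) * (ξ : ℂ) * (δt : ℂ) * M)‖ ↔
    δt * (1 - 2 * Θ) * ξ ^ 2 * (M.re ^ 2 + M.im ^ 2) ≤ 2 * (ξ * M.im) := by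
  rw [Complex.norm_def, Complex.norm_def,
    Real.sqrt_le_sqrt_iff (Complex.normSq_nonneg _)]
  simp only [Complex.normSq_apply, Complex.add_re, Complex.add_im, Complex.sub_re,
    Complex.sub_im, Complex.mul_re, Complex.mul_im, Complex.I_re, Complex.I_im,
    Complex.one_re, Complex.one_im, Complex.ofReal_re, Complex.ofReal_im]
  constructor
  · intro h
    have := mul_le_mul_of_nonneg_left h (le_of_lt (inv_pos.mpr hδt))
    nlinarith [sq_nonneg (ξ * δt), mul_pos hδt hδt]
  · intro h
    nlinarith [mul_le_mul_of_nonneg_left h hδt.le, sq_nonneg (ξ * δt)]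
end

section
/- Let $\bar u \in \mathbb{R}$, $\bar c, \bar\sigma > 0$, $\delta x > 0$, $\lambda_1 = \delta t/\delta x$, $\lambda_2 = \delta t/\delta x^2$, and $\Theta \in [0,1/2)$. If $(|\bar u| + \bar c)\lambda_1 + 2\sqrt{\bar\sigma}\lambda_2 \leq \sqrt{2/(1-2\Theta)}$, then for all $s \in [0,1]$, $(1-s)\big(\bar u \pm \sqrt{\bar c^2 + 4\bar\sigma s/\delta x^2}\big)^2 \lambda_1^2 + s \leq \frac{2\lambda_1 q}{1-2\Theta}$ with $q = 1/\lambda_1$ (equivalently, the Lax-Friedrichs stability condition of Proposition 2.3 holds with $q = 1/\lambda_1$). -/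
/-- Corollary of Proposition 2.3 for the classical Lax–Friedrichs scheme (`q = 1/lam1`):
the condition `(|ū| + c̄)lam1 + 2√σ̄ lam2 ≤ √(2/(1-2Θ))` implies the sharp stability
condition for all `s ∈ [0,1]`. -/
theorem lax_friedrichs_cfl (u c σ δx δt lam1 lam2 Θ : ℝ)
    (hc : 0 < c) (hσ : 0 < σ) (hδx : 0 < δx) (hδt : 0 < δt)
    (hlam1 : lam1 = δt / δx) (hlam2 : lam2 = δt / δx ^ 2)
    (hΘ : Θ ∈ Set.Ico (0 : ℝ) (1 / 2))
    (h : (|u| + c) * lam1 + 2 * Real.sqrt σ * lam2 ≤ Real.sqrt (2 / (1 - 2 * Θ))) :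
    ∀ s ∈ Set.Icc (0 : ℝ) 1,
      (1 - s) * (u + Real.sqrt (c ^ 2 + 4 * σ * s / δx ^ 2)) ^ 2 * lam1 ^ 2 + s ≤
          2 * lam1 * (1 / lam1) / (1 - 2 * Θ) ∧
        (1 - s) * (u - Real.sqrt (c ^ 2 + 4 * σ * s / δx ^ 2)) ^ 2 * lam1 ^ 2 + s ≤
          2 * lam1 * (1 / lam1) / (1 - 2 * Θ) := by
  intro s hs
  obtain ⟨hs0, hs1⟩ := hs
  obtain ⟨hΘ0, hΘh⟩ := hΘ
  have h1 : (0:ℝ) < 1 - 2 * Θ := by linarith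
  have hlam1pos : 0 < lam1 := by rw [hlam1]; positivity
  set K := Real.sqrt (2 / (1 - 2 * Θ)) with hKdef
  have hK2 : K ^ 2 = 2 / (1 - 2 * Θ) := Real.sq_sqrt (by positivity)
  have hK1 : 1 ≤ K ^ 2 := by
    rw [hK2, le_div_iff₀ h1]; linarith
  have hσs : 0 ≤ Real.sqrt σ := Real.sqrt_nonneg σ
  have hσ2 : Real.sqrt σ ^ 2 = σ := Real.sq_sqrt hσ.le
  have hl2 : lam2 = lam1 / δx := by
    rw [hlam1, hlam2, sq, div_div]
  -- r and its bound
  set r := Real.sqrt (c ^ 2 + 4 * σ * s / δx ^ 2) with hrdef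
  have hr0 : 0 ≤ r := Real.sqrt_nonneg _
  have hrle : r ≤ c + 2 * Real.sqrt σ / δx := by
    have hb : c ^ 2 + 4 * σ * s / δx ^ 2 ≤ (c + 2 * Real.sqrt σ / δx) ^ 2 := by
      have h4 : 4 * σ * s / δx ^ 2 ≤ 4 * σ / δx ^ 2 := by
        apply div_le_div_of_nonneg_right _ (by positivity)
        nlinarith
      have hexp : (c + 2 * Real.sqrt σ / δx) ^ 2
          = c ^ 2 + 4 * c * Real.sqrt σ / δx + 4 * σ / δx ^ 2 := by
        have hδx2 : (δx:ℝ) ^ 2 ≠ 0 := by positivity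
        field_simp
        linear_combination 4 * hσ2
      have hcross : 0 ≤ 4 * c * Real.sqrt σ / δx := by positivity
      linarith
    calc r ≤ Real.sqrt ((c + 2 * Real.sqrt σ / δx) ^ 2) := Real.sqrt_le_sqrt hb
      _ = c + 2 * Real.sqrt σ / δx := Real.sqrt_sq (by positivity)
  set M := |u| + c + 2 * Real.sqrt σ / δx with hMdef
  have hM0 : 0 ≤ M := by positivity
  have hMK : M * lam1 ≤ K := by
    have heq : M * lam1 = (|u| + c) * lam1 + 2 * Real.sqrt σ * lam2 := by
      rw [hl2, hMdef]; ring
    linarith [heq.le, heq.ge]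
  have hRHS : 2 * lam1 * (1 / lam1) / (1 - 2 * Θ) = K ^ 2 := by
    rw [hK2]; field_simp
  have key : ∀ v : ℝ, |v| ≤ M → (1 - s) * v ^ 2 * lam1 ^ 2 + s ≤
      2 * lam1 * (1 / lam1) / (1 - 2 * Θ) := by
    intro v hv
    rw [hRHS]
    obtain ⟨hvl', hvr'⟩ := abs_le.mp hv
    have hv2 : v ^ 2 ≤ M ^ 2 := by nlinarith
    have hvl : v ^ 2 * lam1 ^ 2 ≤ K ^ 2 := by
      have h1' : v ^ 2 * lam1 ^ 2 ≤ (M * lam1) ^ 2 := by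
        rw [mul_pow]
        exact mul_le_mul_of_nonneg_right hv2 (sq_nonneg lam1)
      have h2' : (M * lam1) ^ 2 ≤ K ^ 2 :=
        pow_le_pow_left₀ (mul_nonneg hM0 hlam1pos.le) hMK 2
      linarith
    have h3' : (1 - s) * (v ^ 2 * lam1 ^ 2) ≤ (1 - s) * K ^ 2 :=
      mul_le_mul_of_nonneg_left hvl (by linarith)
    have h5 : (1 - s) * K ^ 2 + s ≤ K ^ 2 := by
      have h4' : s * 1 ≤ s * K ^ 2 := mul_le_mul_of_nonneg_left hK1 hs0
      calc (1 - s) * K ^ 2 + s = K ^ 2 - s * K ^ 2 + s := by ring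
        _ ≤ K ^ 2 := by linarith
    calc (1 - s) * v ^ 2 * lam1 ^ 2 + s = (1 - s) * (v ^ 2 * lam1 ^ 2) + s := by ring
      _ ≤ (1 - s) * K ^ 2 + s := by linarith
      _ ≤ K ^ 2 := h5
  constructor
  · apply key
    calc |u + r| ≤ |u| + |r| := abs_add_le _ _
      _ ≤ M := by rw [abs_of_nonneg hr0]; simp only [hMdef]; linarith
  · apply key
    calc |u - r| ≤ |u| + |r| := abs_sub _ _
      _ ≤ M := by rw [abs_of_nonneg hr0]; simp only [hMdef]; linarith
end
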